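/- For every cograph $G$, the minimum number of distinct eigenvalues over all matrices in $S(G)$ satisfies $q(G) \leq 4$. -/

import Mathlib

/-- A cograph is a graph with no induced subgraph isomorphic to the path `P₄`. -/
def IsCograph {V : Type*} (G : SimpleGraph V) : Prop :=
  IsEmpty (SimpleGraph.pathGraph 4 ↪g G)

/-- The set of numbers of distinct eigenvalues of matrices in `S(G)`. -/
def eigCounts (n : ℕ) (G : SimpleGraph (Fin n)) : Set ℕ :=
  {k : ℕ | ∃ M : Matrix (Fin n) (Fin n) ℝ, M.IsSymm ∧
    (∀ i j, i ≠ j → (M i j ≠ 0 ↔ G.Adj i j)) ∧ (spectrum ℝ M).ncard = k}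

open Matrix SimpleGraph

section Alg
variable {R : Type} [Ring R]

/-- case d = 1, M = N + z -/
lemma quartic_case1 (N z w : R)
    (hNz : N*z = z) (hzN : z*N = z) (hzz : z*z = w)
    (hwz : w*z = z) (hNw : N*w = w) (hwN : w*N = w) (hww : w*w = w)
    (hT : N*(N-1)*(N-2)*(N-3) = 0) :
    (N+z)*((N+z)-1)*((N+z)-2)*((N+z)-3) = 0 := by
  have e1 : (N+z)*((N+z)-2) = N*N - 2*N + w := by
    have h : (N+z)*((N+z)-2) = N*N + (N*z + z*N) + z*z - 2*N - 2*z := by noncomm_ring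
    rw [h, hNz, hzN, hzz]; noncomm_ring
  have e2 : ((N+z)-1)*((N+z)-3) = N*N - 4*N + 3 - 2*z + w := by
    have h : ((N+z)-1)*((N+z)-3) = N*N + (N*z + z*N) + z*z - 4*N - 4*z + 3*1 := by noncomm_ring
    rw [h, hNz, hzN, hzz, mul_one]; noncomm_ring
  have hPQ : (N*N - 2*N)*(N*N - 4*N + 3) = 0 := by
    have h : (N*N - 2*N)*(N*N - 4*N + 3) = N*(N-1)*(N-2)*(N-3) := by noncomm_ring
    rw [h, hT]
  have hPz : (N*N - 2*N)*z = -z := by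
    have h : (N*N - 2*N)*z = N*(N*z) - 2*(N*z) := by noncomm_ring
    rw [h, hNz, hNz]; noncomm_ring
  have hPw : (N*N - 2*N)*w = -w := by
    have h : (N*N - 2*N)*w = N*(N*w) - 2*(N*w) := by noncomm_ring
    rw [h, hNw, hNw]; noncomm_ring
  have hwQ : w*(N*N - 4*N + 3) = 0 := by
    have h : w*(N*N - 4*N + 3) = (w*N)*N - 4*(w*N) + 3*w := by noncomm_ring
    rw [h, hwN, hwN]; noncomm_ring
  calc (N+z)*((N+z)-1)*((N+z)-2)*((N+z)-3)
      = ((N+z)*((N+z)-2)) * (((N+z)-1)*((N+z)-3)) := by noncomm_ring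
    _ = (N*N - 2*N + w) * (N*N - 4*N + 3 - 2*z + w) := by rw [e1, e2]
    _ = (N*N - 2*N)*(N*N - 4*N + 3) - 2*((N*N - 2*N)*z) + (N*N - 2*N)*w
        + w*(N*N - 4*N + 3) - 2*(w*z) + w*w := by noncomm_ring
    _ = 0 := by rw [hPQ, hPz, hPw, hwQ, hwz, hww]; noncomm_ring

/-- case d = 2, M = N - z -/
lemma quartic_case2 (N z w : R)
    (hNz : N*z = z + z) (hzN : z*N = z + z) (hzz : z*z = w)
    (hwz : w*z = z) (hzw : z*w = z) (hNw : N*w = w + w) (hwN : w*N = w + w) (hww : w*w = w)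
    (hT : N*(N-1)*(N-2)*(N-3) = 0) :
    (N-z)*((N-z)-1)*((N-z)-2)*((N-z)-3) = 0 := by
  have e1 : (N-z)*((N-z)-2) = N*N - 2*N - 2*z + w := by
    have h : (N-z)*((N-z)-2) = N*N - (N*z + z*N) + z*z - 2*N + 2*z := by noncomm_ring
    rw [h, hNz, hzN, hzz]; noncomm_ring
  have e2 : ((N-z)-1)*((N-z)-3) = N*N - 4*N + 3 + w := by
    have h : ((N-z)-1)*((N-z)-3) = N*N - (N*z + z*N) + z*z - 4*N + 4*z + 3*1 := by noncomm_ring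
    rw [h, hNz, hzN, hzz, mul_one]; noncomm_ring
  have hPQ : (N*N - 2*N)*(N*N - 4*N + 3) = 0 := by
    have h : (N*N - 2*N)*(N*N - 4*N + 3) = N*(N-1)*(N-2)*(N-3) := by noncomm_ring
    rw [h, hT]
  have hPw : (N*N - 2*N)*w = 0 := by
    have h : (N*N - 2*N)*w = N*(N*w) - 2*(N*w) := by noncomm_ring
    rw [h, hNw]
    have h2 : N*(w+w) = N*w + N*w := by noncomm_ring
    rw [h2, hNw]; noncomm_ring
  have hzQ : z*(N*N - 4*N + 3) = -z := by
    have h : z*(N*N - 4*N + 3) = (z*N)*N - 4*(z*N) + 3*z := by noncomm_ring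
    rw [h, hzN]
    have h2 : (z+z)*N = z*N + z*N := by noncomm_ring
    rw [h2, hzN]; noncomm_ring
  have hwQ : w*(N*N - 4*N + 3) = -w := by
    have h : w*(N*N - 4*N + 3) = (w*N)*N - 4*(w*N) + 3*w := by noncomm_ring
    rw [h, hwN]
    have h2 : (w+w)*N = w*N + w*N := by noncomm_ring
    rw [h2, hwN]; noncomm_ring
  calc (N-z)*((N-z)-1)*((N-z)-2)*((N-z)-3)
      = ((N-z)*((N-z)-2)) * (((N-z)-1)*((N-z)-3)) := by noncomm_ring
    _ = (N*N - 2*N - 2*z + w) * (N*N - 4*N + 3 + w) := by rw [e1, e2]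
    _ = (N*N - 2*N)*(N*N - 4*N + 3) + (N*N - 2*N)*w - 2*(z*(N*N - 4*N + 3)) - 2*(z*w)
        + w*(N*N - 4*N + 3) + w*w := by noncomm_ring
    _ = 0 := by rw [hPQ, hPw, hzQ, hzw, hwQ, hww]; noncomm_ring

end Alg


section MatHelpers
variable {V : Type} [Fintype V]

lemma vecMulVec_mulVec' (u v x : V → ℝ) : (vecMulVec u v) *ᵥ x = (v ⬝ᵥ x) • u := by
  ext i
  simp only [vecMulVec, mulVec, dotProduct, Pi.smul_apply, smul_eq_mul, of_apply, Finset.sum_mul,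
    Finset.mul_sum]
  exact Finset.sum_congr rfl (fun k _ => by ring)

lemma vecMulVec_mul_vecMulVec (a b c d : V → ℝ) :
    (vecMulVec a b) * (vecMulVec c d) = (b ⬝ᵥ c) • vecMulVec a d := by
  ext i j
  simp only [vecMulVec, mul_apply, dotProduct, Matrix.smul_apply, smul_eq_mul, of_apply, Finset.sum_mul]
  exact Finset.sum_congr rfl (fun k _ => by ring)

lemma mul_vecMulVec (N : Matrix V V ℝ) (u v : V → ℝ) :
    N * vecMulVec u v = vecMulVec (N *ᵥ u) v := by
  ext i j
  simp only [vecMulVec, mul_apply, mulVec, dotProduct, of_apply, Finset.sum_mul]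
  exact Finset.sum_congr rfl (fun k _ => by ring)

lemma vecMulVec_mul (N : Matrix V V ℝ) (u v : V → ℝ) :
    vecMulVec u v * N = vecMulVec u (v ᵥ* N) := by
  ext i j
  simp only [vecMulVec, mul_apply, vecMul, dotProduct, of_apply, Finset.mul_sum]
  exact Finset.sum_congr rfl (fun k _ => by ring)

omit [Fintype V] in
lemma vecMulVec_transpose' (u v : V → ℝ) : (vecMulVec u v)ᵀ = vecMulVec v u := by
  ext i j; simp [vecMulVec, transpose_apply, mul_comm]

omit [Fintype V] in
lemma vecMulVec_smul_left (r : ℝ) (u v : V → ℝ) : vecMulVec (r • u) v = r • vecMulVec u v := by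
  ext i j; simp [vecMulVec, mul_assoc]

omit [Fintype V] in
lemma vecMulVec_smul_right (r : ℝ) (u v : V → ℝ) : vecMulVec u (r • v) = r • vecMulVec u v := by
  ext i j; simp [vecMulVec]; ring

end MatHelpers

def QInv {V : Type} [Fintype V] [DecidableEq V] (G : SimpleGraph V) (s : ℝ) : Prop :=
  ∃ (M : Matrix V V ℝ) (w : V → ℝ), M.IsSymm ∧
    (∀ i j, i ≠ j → (M i j ≠ 0 ↔ G.Adj i j)) ∧ (∀ i, w i ≠ 0) ∧ (w ⬝ᵥ w = 1) ∧
    M *ᵥ w = s • w ∧ M * (M - 1) * (M - 2) * (M - 3) = 0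

lemma QInv.transport {V W : Type} [Fintype V] [Fintype W] [DecidableEq V] [DecidableEq W]
    {G : SimpleGraph V} {G' : SimpleGraph W} (e : V ≃ W)
    (he : ∀ a b, G.Adj a b ↔ G'.Adj (e a) (e b)) {s : ℝ} (h : QInv G s) : QInv G' s := by
  obtain ⟨M, w, hsym, hsupp, hwz, hnorm, heig, hquart⟩ := h
  have hM : M.submatrix ⇑e.symm ⇑e.symm = (Matrix.reindexAlgEquiv ℝ ℝ e) M := rfl
  refine ⟨M.submatrix e.symm e.symm, w ∘ e.symm, ?_, ?_, fun i => hwz _, ?_, ?_, ?_⟩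
  · ext i j
    simp only [transpose_apply, submatrix_apply]
    exact congrFun (congrFun hsym _) _
  · intro i j hij
    have hne : e.symm i ≠ e.symm j := fun hc => hij (by simpa using congrArg e hc)
    simp only [submatrix_apply]
    rw [hsupp _ _ hne, he]
    simp
  · rw [← hnorm]
    simpa [dotProduct] using Fintype.sum_equiv e.symm (fun i => w (e.symm i) * w (e.symm i)) (fun i => w i * w i) (fun i => rfl)
  · rw [Matrix.submatrix_mulVec_equiv]
    have : (w ∘ ⇑e.symm) ∘ ⇑e.symm.symm = w := by ext i; simp
    rw [this, heig]
    rfl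
  · rw [hM]
    have h2 : (2 : Matrix W W ℝ) = (Matrix.reindexAlgEquiv ℝ ℝ e) 2 := by
      rw [map_ofNat]
    have h3 : (3 : Matrix W W ℝ) = (Matrix.reindexAlgEquiv ℝ ℝ e) 3 := by
      rw [map_ofNat]
    rw [h2, h3, ← _root_.map_one (Matrix.reindexAlgEquiv ℝ ℝ e), ← map_sub, ← map_sub, ← map_sub,
      ← _root_.map_mul, ← _root_.map_mul, ← _root_.map_mul, hquart, map_zero]

section Glue
variable {V : Type} [Fintype V] [DecidableEq V]

lemma glue (G : SimpleGraph V) (A : Set V) [DecidablePred (· ∈ A)]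
    (s d c : ℝ) (hsd : s = d + c)
    (hcross : ∀ a, a ∈ A → ∀ b, b ∈ Aᶜ → (G.Adj a b ↔ c ≠ 0))
    (h1 : QInv (G.comap ((↑) : ↥A → V)) d)
    (h2 : QInv (G.comap ((↑) : ↥(Aᶜ) → V)) d)
    (halg : ∀ (N z w : Matrix (↥A ⊕ ↥(Aᶜ)) (↥A ⊕ ↥(Aᶜ)) ℝ),
      N*z = d • z → z*N = d • z → z*z = w → w*z = z → z*w = z →
      N*w = d • w → w*N = d • w → w*w = w → N*(N-1)*(N-2)*(N-3) = 0 →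
      (N + c•z)*((N + c•z)-1)*((N + c•z)-2)*((N + c•z)-3) = 0) :
    QInv G s := by
  obtain ⟨M₁, w₁, hsym₁, hsupp₁, hwz₁, hnorm₁, heig₁, hquart₁⟩ := h1
  obtain ⟨M₂, w₂, hsym₂, hsupp₂, hwz₂, hnorm₂, heig₂, hquart₂⟩ := h2
  set N : Matrix (↥A ⊕ ↥(Aᶜ)) (↥A ⊕ ↥(Aᶜ)) ℝ := fromBlocks M₁ 0 0 M₂ with hN
  set u : (↥A ⊕ ↥(Aᶜ)) → ℝ := Sum.elim w₁ 0 with hu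
  set v : (↥A ⊕ ↥(Aᶜ)) → ℝ := Sum.elim 0 w₂ with hv
  set z : Matrix (↥A ⊕ ↥(Aᶜ)) (↥A ⊕ ↥(Aᶜ)) ℝ := vecMulVec u v + vecMulVec v u with hz
  set wM : Matrix (↥A ⊕ ↥(Aᶜ)) (↥A ⊕ ↥(Aᶜ)) ℝ := vecMulVec u u + vecMulVec v v with hwM
  have duu : u ⬝ᵥ u = 1 := by
    rw [← hnorm₁]; simp [dotProduct, Fintype.sum_sum_type, hu]
  have dvv : v ⬝ᵥ v = 1 := by
    rw [← hnorm₂]; simp [dotProduct, Fintype.sum_sum_type, hv]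
  have duv : u ⬝ᵥ v = 0 := by simp [dotProduct, Fintype.sum_sum_type, hu, hv]
  have dvu : v ⬝ᵥ u = 0 := by simp [dotProduct, Fintype.sum_sum_type, hu, hv]
  have hNu : N *ᵥ u = d • u := by
    funext i
    rw [hN, hu, fromBlocks_mulVec]
    cases i <;>
      simp [Sum.elim_comp_inl, Sum.elim_comp_inr, heig₁, heig₂, mulVec_zero, zero_mulVec]
  have hNv : N *ᵥ v = d • v := by
    funext i
    rw [hN, hv, fromBlocks_mulVec]
    cases i <;>
      simp [Sum.elim_comp_inl, Sum.elim_comp_inr, heig₁, heig₂, mulVec_zero, zero_mulVec]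
  have hsymN : Nᵀ = N := by
    rw [hN, fromBlocks_transpose, transpose_zero, transpose_zero, hsym₁, hsym₂]
  have huN : u ᵥ* N = d • u := by rw [← mulVec_transpose, hsymN, hNu]
  have hvN : v ᵥ* N = d • v := by rw [← mulVec_transpose, hsymN, hNv]
  have hNz : N * z = d • z := by
    rw [hz, mul_add, _root_.mul_vecMulVec, _root_.mul_vecMulVec, hNu, hNv, vecMulVec_smul_left,
      vecMulVec_smul_left, smul_add]
  have hzN : z * N = d • z := by
    rw [hz, add_mul, _root_.vecMulVec_mul, _root_.vecMulVec_mul, huN, hvN, vecMulVec_smul_right,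
      vecMulVec_smul_right, smul_add]
  have hzz : z * z = wM := by
    rw [hz, hwM, add_mul, mul_add, mul_add, _root_.vecMulVec_mul_vecMulVec, _root_.vecMulVec_mul_vecMulVec,
      _root_.vecMulVec_mul_vecMulVec, _root_.vecMulVec_mul_vecMulVec, dvu, duu, dvv, duv]
    simp [add_comm]
  have hwz : wM * z = z := by
    rw [hz, hwM, add_mul, mul_add, mul_add, _root_.vecMulVec_mul_vecMulVec, _root_.vecMulVec_mul_vecMulVec,
      _root_.vecMulVec_mul_vecMulVec, _root_.vecMulVec_mul_vecMulVec, duu, duv, dvu, dvv]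
    simp
  have hzw : z * wM = z := by
    rw [hz, hwM, add_mul, mul_add, mul_add, _root_.vecMulVec_mul_vecMulVec, _root_.vecMulVec_mul_vecMulVec,
      _root_.vecMulVec_mul_vecMulVec, _root_.vecMulVec_mul_vecMulVec, duu, duv, dvu, dvv]
    simp [add_comm]
  have hNw : N * wM = d • wM := by
    rw [hwM, mul_add, _root_.mul_vecMulVec, _root_.mul_vecMulVec, hNu, hNv, vecMulVec_smul_left,
      vecMulVec_smul_left, smul_add]
  have hwN : wM * N = d • wM := by
    rw [hwM, add_mul, _root_.vecMulVec_mul, _root_.vecMulVec_mul, huN, hvN, vecMulVec_smul_right,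
      vecMulVec_smul_right, smul_add]
  have hww : wM * wM = wM := by
    rw [hwM, add_mul, mul_add, mul_add, _root_.vecMulVec_mul_vecMulVec, _root_.vecMulVec_mul_vecMulVec,
      _root_.vecMulVec_mul_vecMulVec, _root_.vecMulVec_mul_vecMulVec, duu, duv, dvu, dvv]
    simp
  have hsub : ∀ (X₁ : Matrix ↥A ↥A ℝ) (X₂ : Matrix ↥(Aᶜ) ↥(Aᶜ) ℝ),
      fromBlocks X₁ 0 0 X₂ - 1 = fromBlocks (X₁ - 1) 0 0 (X₂ - 1) := by
    intro X₁ X₂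
    rw [← fromBlocks_one]
    ext i j
    cases i <;> cases j <;> simp [fromBlocks]
  have e1 : N - 1 = fromBlocks (M₁ - 1) 0 0 (M₂ - 1) := by rw [hN]; exact hsub M₁ M₂
  have e2 : N - 2 = fromBlocks (M₁ - 2) 0 0 (M₂ - 2) := by
    have h21 : N - 2 = (N - 1) - 1 := by rw [sub_sub]; norm_num
    rw [h21, e1, hsub]
    have a1 : M₁ - 1 - 1 = M₁ - 2 := by rw [sub_sub]; norm_num
    have a2 : M₂ - 1 - 1 = M₂ - 2 := by rw [sub_sub]; norm_num
    rw [a1, a2]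
  have e3 : N - 3 = fromBlocks (M₁ - 3) 0 0 (M₂ - 3) := by
    have h32 : N - 3 = (N - 2) - 1 := by rw [sub_sub]; norm_num
    rw [h32, e2, hsub]
    have a1 : M₁ - 2 - 1 = M₁ - 3 := by rw [sub_sub]; norm_num
    have a2 : M₂ - 2 - 1 = M₂ - 3 := by rw [sub_sub]; norm_num
    rw [a1, a2]
  have hTN : N * (N - 1) * (N - 2) * (N - 3) = 0 := by
    rw [e1, e2, e3, hN, fromBlocks_multiply, fromBlocks_multiply, fromBlocks_multiply]
    simp only [Matrix.mul_zero, Matrix.zero_mul, add_zero, zero_add, mul_zero, zero_mul]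
    rw [hquart₁, hquart₂]
    exact fromBlocks_zero
  -- the assembled matrix
  set Mfin : Matrix (↥A ⊕ ↥(Aᶜ)) (↥A ⊕ ↥(Aᶜ)) ℝ := N + c • z with hM
  have hquartM : Mfin * (Mfin - 1) * (Mfin - 2) * (Mfin - 3) = 0 :=
    halg N z wM hNz hzN hzz hwz hzw hNw hwN hww hTN
  -- eigen
  have hzuv : z *ᵥ (u + v) = u + v := by
    rw [hz, add_mulVec, vecMulVec_mulVec', vecMulVec_mulVec', dotProduct_add, dotProduct_add,
      dvu, dvv, duu, duv]
    simp [add_comm]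
  have heigM : Mfin *ᵥ (u + v) = s • (u + v) := by
    rw [hM, add_mulVec, mulVec_add, hNu, hNv, smul_mulVec, hzuv, hsd, add_smul, smul_add]
    module
  -- final eigenvector
  set r : ℝ := (Real.sqrt 2)⁻¹ with hr
  have hrne : r ≠ 0 := by
    rw [hr]
    simp [Real.sqrt_eq_zero']
  have hxx : (u + v) ⬝ᵥ (u + v) = 2 := by
    rw [dotProduct_add, add_dotProduct, add_dotProduct, duu, duv, dvu, dvv]; norm_num
  refine QInv.transport (G := G.comap ⇑(Equiv.Set.sumCompl A)) (Equiv.Set.sumCompl A) (fun a b => Iff.rfl) ?_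
  refine ⟨Mfin, r • (u + v), ?_, ?_, ?_, ?_, ?_, hquartM⟩
  · -- symmetry
    show Mfinᵀ = Mfin
    rw [hM, transpose_add, transpose_smul, hsymN, hz, transpose_add, vecMulVec_transpose',
      vecMulVec_transpose', add_comm (vecMulVec v u)]
  · -- support
    intro i j hij
    have key : ∀ x y, (SimpleGraph.comap (⇑(Equiv.Set.sumCompl A)) G).Adj x y =
        G.Adj ((Equiv.Set.sumCompl A) x) ((Equiv.Set.sumCompl A) y) := fun _ _ => rfl
    rw [key]
    cases i with
    | inl a =>
      cases j with
      | inl b =>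
        have hab : a ≠ b := fun hc => hij (by rw [hc])
        have : Mfin (Sum.inl a) (Sum.inl b) = M₁ a b := by
          simp [hM, hN, hz, hu, hv, vecMulVec, fromBlocks]
        rw [this, Equiv.Set.sumCompl_apply_inl, Equiv.Set.sumCompl_apply_inl]
        exact hsupp₁ a b hab
      | inr b =>
        have : Mfin (Sum.inl a) (Sum.inr b) = c * (w₁ a * w₂ b) := by
          simp [hM, hN, hz, hu, hv, vecMulVec, fromBlocks]
        rw [this, Equiv.Set.sumCompl_apply_inl, Equiv.Set.sumCompl_apply_inr]
        rw [(hcross a a.2 b b.2)]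
        constructor
        · intro h hc; exact h (by rw [hc, zero_mul])
        · intro hc h
          rcases mul_eq_zero.mp h with h' | h'
          · exact hc h'
          · rcases mul_eq_zero.mp h' with h'' | h''
            · exact hwz₁ a h''
            · exact hwz₂ b h''
    | inr a =>
      cases j with
      | inl b =>
        have : Mfin (Sum.inr a) (Sum.inl b) = c * (w₂ a * w₁ b) := by
          simp [hM, hN, hz, hu, hv, vecMulVec, fromBlocks, mul_comm]
        rw [this, Equiv.Set.sumCompl_apply_inl, Equiv.Set.sumCompl_apply_inr]
        have := (hcross b b.2 a a.2)
        rw [G.adj_comm] at this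
        rw [this]
        constructor
        · intro h hc; exact h (by rw [hc, zero_mul])
        · intro hc h
          rcases mul_eq_zero.mp h with h' | h'
          · exact hc h'
          · rcases mul_eq_zero.mp h' with h'' | h''
            · exact hwz₂ a h''
            · exact hwz₁ b h''
      | inr b =>
        have hab : a ≠ b := fun hc => hij (by rw [hc])
        have : Mfin (Sum.inr a) (Sum.inr b) = M₂ a b := by
          simp [hM, hN, hz, hu, hv, vecMulVec, fromBlocks]
        rw [this, Equiv.Set.sumCompl_apply_inr, Equiv.Set.sumCompl_apply_inr]
        exact hsupp₂ a b hab
  · -- nonzero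
    intro i
    cases i with
    | inl a =>
      have : (r • (u + v)) (Sum.inl a) = r * w₁ a := by simp [hu, hv]
      rw [this]
      exact mul_ne_zero hrne (hwz₁ a)
    | inr a =>
      have : (r • (u + v)) (Sum.inr a) = r * w₂ a := by simp [hu, hv]
      rw [this]
      exact mul_ne_zero hrne (hwz₂ a)
  · -- norm
    rw [smul_dotProduct, dotProduct_smul, hxx, hr]
    rw [smul_eq_mul, smul_eq_mul]
    rw [show ((Real.sqrt 2)⁻¹ * ((Real.sqrt 2)⁻¹ * 2)) = (2:ℝ) / (Real.sqrt 2 * Real.sqrt 2) by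
      field_simp]
    rw [Real.mul_self_sqrt (by norm_num)]
    norm_num
  · -- eigen
    rw [mulVec_smul, heigM, smul_comm]
end Glue


lemma p4_of_pattern {V : Type} {G : SimpleGraph V} {a b c d : V}
    (hab : G.Adj a b) (hbc : G.Adj b c) (hcd : G.Adj c d)
    (hac : ¬ G.Adj a c) (had : ¬ G.Adj a d) (hbd : ¬ G.Adj b d)
    (nac : a ≠ c) (nad : a ≠ d) (nbd : b ≠ d) :
    Nonempty (SimpleGraph.pathGraph 4 ↪g G) := by
  have nab : a ≠ b := G.ne_of_adj hab
  have nbc : b ≠ c := G.ne_of_adj hbc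
  have ncd : c ≠ d := G.ne_of_adj hcd
  have hba : G.Adj b a := hab.symm
  have hcb : G.Adj c b := hbc.symm
  have hdc : G.Adj d c := hcd.symm
  have hca : ¬ G.Adj c a := fun h => hac h.symm
  have hda : ¬ G.Adj d a := fun h => had h.symm
  have hdb : ¬ G.Adj d b := fun h => hbd h.symm
  have haa : ¬ G.Adj a a := G.irrefl
  have hbb : ¬ G.Adj b b := G.irrefl
  have hcc : ¬ G.Adj c c := G.irrefl
  have hdd : ¬ G.Adj d d := G.irrefl
  refine ⟨⟨⟨![a,b,c,d], ?_⟩, ?_⟩⟩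
  · intro i j hij
    fin_cases i <;> fin_cases j <;>
      simp_all [nab, nbc, ncd, nac, nad, nbd, nab.symm, nbc.symm, ncd.symm, nac.symm, nad.symm,
        nbd.symm]
  · intro i j
    change G.Adj (![a,b,c,d] i) (![a,b,c,d] j) ↔ _
    fin_cases i <;> fin_cases j <;>
      first
        | (simp_all [SimpleGraph.pathGraph_adj]; try decide)
        | decide

lemma p4_free_compl {V : Type} {G : SimpleGraph V}
    (hG : IsEmpty (SimpleGraph.pathGraph 4 ↪g G)) :
    IsEmpty (SimpleGraph.pathGraph 4 ↪g Gᶜ) := by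
  constructor
  intro f
  have hAdj : ∀ i j : Fin 4, i ≠ j → ¬ (pathGraph 4).Adj i j → G.Adj (f i) (f j) := by
    intro i j hne hnadj
    have h1 : ¬ Gᶜ.Adj (f i) (f j) := fun h => hnadj (f.map_rel_iff.mp h)
    rw [SimpleGraph.compl_adj] at h1
    push_neg at h1
    exact h1 (fun hc => hne (f.injective hc))
  have hNAdj : ∀ i j : Fin 4, (pathGraph 4).Adj i j → ¬ G.Adj (f i) (f j) := by
    intro i j hadj
    exact ((SimpleGraph.compl_adj _ _ _).mp (f.map_rel_iff.mpr hadj)).2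
  have h01 : ¬ (pathGraph 4).Adj 1 3 := by rw [SimpleGraph.pathGraph_adj]; decide
  have h30 : ¬ (pathGraph 4).Adj 3 0 := by rw [SimpleGraph.pathGraph_adj]; decide
  have h02 : ¬ (pathGraph 4).Adj 0 2 := by rw [SimpleGraph.pathGraph_adj]; decide
  have a10 : (pathGraph 4).Adj 1 0 := by rw [SimpleGraph.pathGraph_adj]; decide
  have a12 : (pathGraph 4).Adj 1 2 := by rw [SimpleGraph.pathGraph_adj]; decide
  have a32 : (pathGraph 4).Adj 3 2 := by rw [SimpleGraph.pathGraph_adj]; decide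
  have hemb := p4_of_pattern (G := G) (a := f 1) (b := f 3) (c := f 0) (d := f 2)
    (hAdj 1 3 (by decide) h01) (hAdj 3 0 (by decide) h30) (hAdj 0 2 (by decide) h02)
    (hNAdj 1 0 a10) (hNAdj 1 2 a12) (hNAdj 3 2 a32)
    (fun h => (by decide : (1 : Fin 4) ≠ 0) (f.injective h))
    (fun h => (by decide : (1 : Fin 4) ≠ 2) (f.injective h))
    (fun h => (by decide : (3 : Fin 4) ≠ 2) (f.injective h))
  exact hG.false hemb.some

def GSep {V : Type} (G : SimpleGraph V) : Prop :=
  ∃ A : Set V, A.Nonempty ∧ Aᶜ.Nonempty ∧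
    ((∀ a ∈ A, ∀ b ∈ Aᶜ, ¬ G.Adj a b) ∨ (∀ a ∈ A, ∀ b ∈ Aᶜ, G.Adj a b))

lemma sep_compl {V : Type} {G : SimpleGraph V} (h : GSep Gᶜ) : GSep G := by
  obtain ⟨A, h1, h2, hor⟩ := h
  refine ⟨A, h1, h2, ?_⟩
  rcases hor with hnone | hall
  · right
    intro a ha b hb
    have hne : a ≠ b := fun hc => (hc ▸ hb) ha
    have := hnone a ha b hb
    rw [SimpleGraph.compl_adj] at this
    push_neg at this
    exact this hne
  · left
    intro a ha b hb
    exact ((SimpleGraph.compl_adj _ _ _).mp (hall a ha b hb)).2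

lemma inner_step {V : Type} {G : SimpleGraph V}
    (hG : IsEmpty (SimpleGraph.pathGraph 4 ↪g G)) (v : V)
    (A₁ B₁ : Set V) (hvA : v ∉ A₁) (hdisj : ∀ a ∈ A₁, a ∉ B₁)
    (hcover : ∀ u, u ≠ v → u ∈ A₁ ∨ u ∈ B₁)
    (hcross : ∀ a ∈ A₁, ∀ b ∈ B₁, ¬ G.Adj a b)
    (y : V) (hyA : y ∈ A₁) (hyv : ¬ G.Adj v y)
    (x₂ : V) (hx₂B : x₂ ∈ B₁) (hx₂ : G.Adj v x₂) : GSep G := by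
  classical
  by_cases hedge : ∃ x ∈ A₁, ∃ y' ∈ A₁, G.Adj v x ∧ ¬ G.Adj v y' ∧ G.Adj x y'
  · exfalso
    obtain ⟨x, hxA, y', hy'A, hvx, hvy', hxy'⟩ := hedge
    have hy'v : y' ≠ v := fun hc => hvA (hc ▸ hy'A)
    have hy'x₂ : y' ≠ x₂ := fun hc => hdisj y' hy'A (hc ▸ hx₂B)
    have hxx₂ : x ≠ x₂ := fun hc => hdisj x hxA (hc ▸ hx₂B)
    have hemb := p4_of_pattern (G := G) (a := y') (b := x) (c := v) (d := x₂)
      hxy'.symm hvx.symm hx₂ (fun h => hvy' h.symm)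
      (hcross y' hy'A x₂ hx₂B) (hcross x hxA x₂ hx₂B) hy'v hy'x₂ hxx₂
    exact hG.false hemb.some
  · push_neg at hedge
    refine ⟨{u | u ∈ A₁ ∧ ¬ G.Adj v u}, ⟨y, hyA, hyv⟩, ⟨v, fun h => hvA h.1⟩, Or.inl ?_⟩
    intro a ha b hb
    simp only [Set.mem_setOf_eq] at ha
    simp only [Set.mem_compl_iff, Set.mem_setOf_eq] at hb
    by_cases hbv : b = v
    · subst hbv; exact fun h => ha.2 h.symm
    · rcases hcover b hbv with hbA | hbB
      · have hvb : G.Adj v b := by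
          by_contra hc
          exact hb ⟨hbA, hc⟩
        intro hadj
        exact hedge b hbA a ha.1 hvb ha.2 hadj.symm
      · exact hcross a ha.1 b hbB

lemma step_noCross {V : Type} {G : SimpleGraph V}
    (hG : IsEmpty (SimpleGraph.pathGraph 4 ↪g G)) (v : V)
    (A₁ B₁ : Set V) (hA₁ : A₁.Nonempty) (hB₁ : B₁.Nonempty)
    (hvA : v ∉ A₁) (hvB : v ∉ B₁) (hdisj : ∀ a ∈ A₁, a ∉ B₁)
    (hcover : ∀ u, u ≠ v → u ∈ A₁ ∨ u ∈ B₁)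
    (hcross : ∀ a ∈ A₁, ∀ b ∈ B₁, ¬ G.Adj a b) : GSep G := by
  classical
  by_cases hA : ∀ a ∈ A₁, ¬ G.Adj v a
  · refine ⟨A₁, hA₁, ⟨v, hvA⟩, Or.inl ?_⟩
    intro a ha b hb
    by_cases hbv : b = v
    · subst hbv; exact fun h => hA a ha h.symm
    · rcases hcover b hbv with h | h
      · exact absurd h hb
      · exact hcross a ha b h
  · push_neg at hA
    obtain ⟨x₁, hx₁A, hx₁⟩ := hA
    by_cases hB : ∀ b ∈ B₁, ¬ G.Adj v b
    · refine ⟨B₁, hB₁, ⟨v, hvB⟩, Or.inl ?_⟩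
      intro a ha b hb
      by_cases hbv : b = v
      · subst hbv; exact fun h => hB a ha h.symm
      · rcases hcover b hbv with h | h
        · exact fun hadj => hcross b h a ha hadj.symm
        · exact absurd h hb
    · push_neg at hB
      obtain ⟨x₂, hx₂B, hx₂⟩ := hB
      by_cases hall : ∀ u, u ≠ v → G.Adj v u
      · refine ⟨{v}, ⟨v, rfl⟩, ⟨x₁, fun h => hvA (h ▸ hx₁A)⟩, Or.inr ?_⟩
        intro a ha b hb
        rcases ha with rfl
        exact hall b (fun hc => hb (hc ▸ rfl))
      · push_neg at hall
        obtain ⟨y, hyv, hy⟩ := hall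
        rcases hcover y hyv with hyA | hyB
        · exact inner_step hG v A₁ B₁ hvA hdisj hcover hcross y hyA hy x₂ hx₂B hx₂
        · refine inner_step hG v B₁ A₁ hvB (fun b hb ha => hdisj b ha hb)
            (fun u hu => (hcover u hu).symm)
            (fun b hb a ha hadj => hcross a ha b hb hadj.symm) y hyB hy x₁ hx₁A hx₁

lemma dichotomy : ∀ (n : ℕ) (V : Type) [Fintype V] [DecidableEq V] (G : SimpleGraph V),
    Fintype.card V ≤ n → IsEmpty (SimpleGraph.pathGraph 4 ↪g G) →
    2 ≤ Fintype.card V → GSep G := by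
  intro n
  induction n with
  | zero =>
    intro V _ _ G hcard _ h2
    omega
  | succ n IH =>
    intro V _ _ G hcard hG h2
    classical
    obtain ⟨v⟩ : Nonempty V := Fintype.card_pos_iff.mp (by omega)
    have hG' : IsEmpty (SimpleGraph.pathGraph 4 ↪g
        (G.comap ((↑) : {u : V // u ≠ v} → V))) := by
      constructor
      intro f
      exact hG.false
        ((SimpleGraph.Embedding.comap ⟨_, Subtype.val_injective⟩ G).comp f)
    have hcardlt : Fintype.card {u : V // u ≠ v} < Fintype.card V :=
      Fintype.card_subtype_lt (x := v) (by simp)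
    by_cases hsmall : Fintype.card {u : V // u ≠ v} ≤ 1
    · -- |V| = 2 case
      haveI hsub : Subsingleton {u : V // u ≠ v} := Fintype.card_le_one_iff_subsingleton.mp hsmall
      obtain ⟨u, hu⟩ : ∃ u : V, u ≠ v := by
        by_contra hc
        push_neg at hc
        have : Fintype.card V ≤ 1 := Fintype.card_le_one_iff.mpr (fun a b => by rw [hc a, hc b])
        omega
      have huniq : ∀ b : V, b ≠ v → b = u := by
        intro b hb
        have := hsub.elim ⟨b, hb⟩ ⟨u, hu⟩
        exact congrArg Subtype.val this
      by_cases hadj : G.Adj v u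
      · refine ⟨{v}, ⟨v, rfl⟩, ⟨u, by simp [hu]⟩, Or.inr ?_⟩
        intro a ha b hb
        simp only [Set.mem_singleton_iff] at ha
        subst ha
        have hbv : b ≠ a := fun hc => hb (hc ▸ rfl)
        rw [huniq b hbv]
        exact hadj
      · refine ⟨{v}, ⟨v, rfl⟩, ⟨u, by simp [hu]⟩, Or.inl ?_⟩
        intro a ha b hb
        simp only [Set.mem_singleton_iff] at ha
        subst ha
        have hbv : b ≠ a := fun hc => hb (hc ▸ rfl)
        rw [huniq b hbv]
        exact hadj
    · have hsep' := IH {u : V // u ≠ v} (G.comap ((↑) : {u : V // u ≠ v} → V))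
        (by omega) hG' (by omega)
      obtain ⟨A', hA'1, hA'2, hor⟩ := hsep'
      set A₁ : Set V := Subtype.val '' A' with hA₁def
      set B₁ : Set V := Subtype.val '' A'ᶜ with hB₁def
      have hvA : v ∉ A₁ := by
        rintro ⟨x, _, hxv⟩; exact x.2 hxv
      have hvB : v ∉ B₁ := by
        rintro ⟨x, _, hxv⟩; exact x.2 hxv
      have hA₁ne : A₁.Nonempty := hA'1.image _
      have hB₁ne : B₁.Nonempty := hA'2.image _
      have hdisj : ∀ a ∈ A₁, a ∉ B₁ := by
        rintro a ⟨x, hx, rfl⟩ ⟨y, hy, hxy⟩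
        have : y = x := Subtype.val_injective hxy
        exact hy (this ▸ hx)
      have hcover : ∀ u, u ≠ v → u ∈ A₁ ∨ u ∈ B₁ := by
        intro u hu
        by_cases h : (⟨u, hu⟩ : {u : V // u ≠ v}) ∈ A'
        · exact Or.inl ⟨⟨u, hu⟩, h, rfl⟩
        · exact Or.inr ⟨⟨u, hu⟩, h, rfl⟩
      rcases hor with hnone | hall
      · refine step_noCross hG v A₁ B₁ hA₁ne hB₁ne hvA hvB hdisj hcover ?_
        rintro a ⟨x, hx, rfl⟩ b ⟨y, hy, rfl⟩
        exact hnone x hx y hy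
      · apply sep_compl
        refine step_noCross (G := Gᶜ) (p4_free_compl hG) v A₁ B₁ hA₁ne hB₁ne hvA hvB hdisj
          hcover ?_
        rintro a ⟨x, hx, rfl⟩ b ⟨y, hy, rfl⟩
        intro hadj
        exact ((SimpleGraph.compl_adj _ _ _).mp hadj).2 (hall x hx y hy)


lemma comap_p4_free {V : Type} {G : SimpleGraph V}
    (hG : IsEmpty (SimpleGraph.pathGraph 4 ↪g G)) (A : Set V) :
    IsEmpty (SimpleGraph.pathGraph 4 ↪g (G.comap ((↑) : ↥A → V))) := by
  constructor
  intro f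
  exact hG.false ((SimpleGraph.Embedding.comap ⟨_, Subtype.val_injective⟩ G).comp f)

lemma main_lemma : ∀ (n : ℕ) (V : Type) [Fintype V] [DecidableEq V] (G : SimpleGraph V),
    Fintype.card V ≤ n → IsEmpty (SimpleGraph.pathGraph 4 ↪g G) → Nonempty V →
    ∀ s : ℝ, (s = 1 ∨ s = 2) → QInv G s := by
  intro n
  induction n with
  | zero =>
    intro V _ _ G hcard _ hne s _
    haveI := hne
    have := Fintype.card_pos (α := V)
    omega
  | succ n IH =>
    intro V _ _ G hcard hG hne s hs
    classical
    by_cases hsmall : Fintype.card V ≤ 1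
    · -- single vertex
      haveI hsub : Subsingleton V := Fintype.card_le_one_iff_subsingleton.mp hsmall
      have hcard1 : Fintype.card V = 1 := by
        haveI := hne
        have := Fintype.card_pos (α := V)
        omega
      have hM : (Matrix.of (fun _ _ => s) : Matrix V V ℝ) = s • 1 := by
        ext i j
        have hij : i = j := Subsingleton.elim i j
        subst hij
        simp [Matrix.one_apply]
      refine ⟨Matrix.of (fun _ _ => s), fun _ => 1, ?_, ?_, ?_, ?_, ?_, ?_⟩
      · ext i j; rfl
      · intro i j hij; exact absurd (Subsingleton.elim i j) hij
      · intro i; norm_num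
      · simp [dotProduct, Finset.card_univ, hcard1]
      · funext i
        simp [mulVec, dotProduct, Finset.card_univ, hcard1]
      · rw [hM]
        have e2 : (2:ℝ) • (1 : Matrix V V ℝ) = 2 := by rw [two_smul]; norm_num
        rcases hs with rfl | rfl
        · have h0 : (1:ℝ) • (1 : Matrix V V ℝ) - 1 = 0 := by rw [one_smul]; norm_num
          rw [mul_assoc, mul_assoc]
          rw [h0]
          simp
        · have h0 : (2:ℝ) • (1 : Matrix V V ℝ) - 2 = 0 := by rw [e2]; norm_num
          rw [mul_assoc]
          rw [h0]
          simp
    · have hsep := dichotomy (n+1) V G hcard hG (by omega)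
      obtain ⟨A, hA, hAc, hor⟩ := hsep
      haveI : DecidablePred (· ∈ A) := fun _ => Classical.dec _
      have hGA := comap_p4_free hG A
      have hGB := comap_p4_free hG Aᶜ
      obtain ⟨a0, ha0⟩ := hA
      obtain ⟨b0, hb0⟩ := hAc
      have hcardA : Fintype.card ↥A ≤ n := by
        have : Fintype.card ↥A < Fintype.card V := Fintype.card_subtype_lt (x := b0) hb0
        omega
      have hcardB : Fintype.card ↥(Aᶜ) ≤ n := by
        have : Fintype.card ↥(Aᶜ) < Fintype.card V := by
          apply Fintype.card_subtype_lt (x := a0)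
          simp [ha0]
        omega
      have hneA : Nonempty ↥A := ⟨⟨a0, ha0⟩⟩
      have hneB : Nonempty ↥(Aᶜ) := ⟨⟨b0, hb0⟩⟩
      rcases hor with hnone | hall
      · -- union case : d = s, c = 0
        refine glue G A s s 0 (by ring) ?_
          (IH ↥A (G.comap _) hcardA hGA hneA s hs)
          (IH ↥(Aᶜ) (G.comap _) hcardB hGB hneB s hs) ?_
        · intro a ha b hb
          constructor
          · intro h; exact absurd h (hnone a ha b hb)
          · intro h; exact absurd rfl h
        · intro N z w _ _ _ _ _ _ _ _ hT
          simpa using hT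
      · -- join case
        rcases hs with rfl | rfl
        · refine glue G A 1 2 (-1) (by ring) ?_
            (IH ↥A (G.comap _) hcardA hGA hneA 2 (Or.inr rfl))
            (IH ↥(Aᶜ) (G.comap _) hcardB hGB hneB 2 (Or.inr rfl)) ?_
          · intro a ha b hb
            simp [hall a ha b hb]
          · intro N z w hNz hzN hzz hwz hzw hNw hwN hww hT
            rw [two_smul] at hNz hzN hNw hwN
            have hres := quartic_case2 N z w hNz hzN hzz hwz hzw hNw hwN hww hT
            have hMeq : N + (-1 : ℝ) • z = N - z := by
              rw [neg_one_smul]; exact (sub_eq_add_neg N z).symm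
            rw [hMeq]
            exact hres
        · refine glue G A 2 1 1 (by ring) ?_
            (IH ↥A (G.comap _) hcardA hGA hneA 1 (Or.inl rfl))
            (IH ↥(Aᶜ) (G.comap _) hcardB hGB hneB 1 (Or.inl rfl)) ?_
          · intro a ha b hb
            simp [hall a ha b hb]
          · intro N z w hNz hzN hzz hwz hzw hNw hwN hww hT
            rw [one_smul] at hNz hzN hNw hwN
            have hres := quartic_case1 N z w hNz hzN hzz hwz hNw hwN hww hT
            rw [one_smul]
            exact hres


theorem cograph_q_le_four (n : ℕ) (G : SimpleGraph (Fin n)) (hG : IsCograph G) :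
    sInf (eigCounts n G) ≤ 4 := by
  classical
  rcases Nat.eq_zero_or_pos n with rfl | hn
  · have h0 : (0:ℕ) ∈ eigCounts 0 G := by
      refine ⟨0, ?_, ?_, ?_⟩
      · ext i j; exact i.elim0
      · intro i; exact i.elim0
      · have hsp : spectrum ℝ (0 : Matrix (Fin 0) (Fin 0) ℝ) = ∅ := by
          ext x
          simp only [spectrum.mem_iff, Set.mem_empty_iff_false, iff_false, not_not]
          exact isUnit_of_subsingleton _
        rw [hsp, Set.ncard_empty]
    exact le_trans (Nat.sInf_le h0) (by norm_num)
  · obtain ⟨M, w, hsym, hsupp, hwz, hnorm, heig, hquart⟩ :=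
      main_lemma n (Fin n) G (by simp) hG ⟨⟨0, hn⟩⟩ 1 (Or.inl rfl)
    have hspec : spectrum ℝ M ⊆ {0, 1, 2, 3} := by
      intro x hx
      set p : Polynomial ℝ :=
        Polynomial.X * (Polynomial.X - 1) * (Polynomial.X - 2) * (Polynomial.X - 3) with hp
      have haev : (Polynomial.aeval M) p = 0 := by
        have : (Polynomial.aeval M) p = M * (M - 1) * (M - 2) * (M - 3) := by
          simp [hp, _root_.map_mul, map_sub, map_ofNat]
        rw [this, hquart]
      have hmem := spectrum.subset_polynomial_aeval M p ⟨x, hx, rfl⟩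
      rw [haev] at hmem
      haveI : Nontrivial (Matrix (Fin n) (Fin n) ℝ) := by
        refine ⟨0, 1, fun h => ?_⟩
        have := congrFun (congrFun h ⟨0, hn⟩) ⟨0, hn⟩
        simp [Matrix.one_apply] at this
      rw [spectrum.zero_eq] at hmem
      have hx0 : x * (x - 1) * (x - 2) * (x - 3) = 0 := by
        simpa [hp] using hmem
      have : x = 0 ∨ x = 1 ∨ x = 2 ∨ x = 3 := by
        rcases mul_eq_zero.mp hx0 with h | h
        · rcases mul_eq_zero.mp h with h' | h'
          · rcases mul_eq_zero.mp h' with h'' | h''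
            · exact Or.inl h''
            · exact Or.inr (Or.inl (by linarith [sub_eq_zero.mp h'']))
          · exact Or.inr (Or.inr (Or.inl (by linarith [sub_eq_zero.mp h'])))
        · exact Or.inr (Or.inr (Or.inr (by linarith [sub_eq_zero.mp h])))
      simpa [Set.mem_insert_iff] using this
    have hmem4 : (spectrum ℝ M).ncard ∈ eigCounts n G := ⟨M, hsym, hsupp, rfl⟩
    have hfin : ({0, 1, 2, 3} : Set ℝ).Finite := Set.toFinite _
    have hle : (spectrum ℝ M).ncard ≤ 4 := by
      calc (spectrum ℝ M).ncard ≤ ({0,1,2,3} : Set ℝ).ncard := Set.ncard_le_ncard hspec hfin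
        _ ≤ 4 := by
          apply le_trans (Set.ncard_insert_le _ _)
          have : (({1,2,3} : Set ℝ)).ncard ≤ 3 := by
            apply le_trans (Set.ncard_insert_le _ _)
            have : (({2,3} : Set ℝ)).ncard ≤ 2 := by
              apply le_trans (Set.ncard_insert_le _ _)
              simp [Set.ncard_singleton]
            omega
          omega
    exact le_trans (Nat.sInf_le hmem4) hle
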